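/- Let Ω ⊆ ℝⁿ be open, ε : {1,…,n} → {1, −1}, h : Ω → ℝ be C², and equip ℝ^{n+4} with the symmetric bilinear form (X,Y) = Σᵢ εⁱ XᵢYᵢ − X₀Y_{n+1} − X_{n+1}Y₀ − X_{n+2}Y_{n+3} − X_{n+3}Y_{n+2}. Let p(u) = (1, u¹, …, uⁿ, ½Σ_k ε^k(u^k)², h(u), 0) and r(u) = (0, ε¹h_1(u), …, εⁿh_n(u), Σ_k u^k h_k(u) − h(u), ½Σ_k ε^k h_k(u)², 1). Then for every u ∈ Ω and every direction v ∈ ℝⁿ, (r(u), Dp(u)[v]) = 0, where Dp(u)[v] is the directional derivative of p at u along v. That is, the family of line generators of the ruled hypersurface of a Hamiltonian system satisfies the Legendre condition with respect to the contact form on lines of the quadric. -/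

import Mathlib

/-- The symmetric bilinear form
`(X,Y) = Σᵢ εⁱ XᵢYᵢ − X₀Y_{n+1} − X_{n+1}Y₀ − X_{n+2}Y_{n+3} − X_{n+3}Y_{n+2}`
on `ℝ^{n+4}`, realized as `ℝ × (Fin n → ℝ) × ℝ × ℝ × ℝ` with coordinates
`(X₀, X₁…Xₙ, X_{n+1}, X_{n+2}, X_{n+3})`. -/
noncomputable def formQ (n : ℕ) (ε : Fin n → ℝ)
    (X Y : ℝ × (Fin n → ℝ) × ℝ × ℝ × ℝ) : ℝ :=
  (∑ i : Fin n, ε i * X.2.1 i * Y.2.1 i) - X.1 * Y.2.2.1 - X.2.2.1 * Y.1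
    - X.2.2.2.1 * Y.2.2.2.2 - X.2.2.2.2 * Y.2.2.2.1

/-- For the Hamiltonian system `uⁱ_t = εⁱ (d/dx)(∂h/∂uⁱ)` with
generators `p(u) = (1, u, ½Σε^k(u^k)², h, 0)` and
`r(u) = (0, ε∇h, Σu^k h_k − h, ½Σε^k h_k², 1)`, one has
`(r(u), Dp(u)[v]) = 0` for every `u ∈ Ω` and every direction `v ∈ ℝⁿ`. That
is, the family of line generators of the ruled hypersurface of a Hamiltonian
system satisfies the Legendre condition with respect to the contact form on
lines of the quadric. -/
theorem stmt_8
    (n : ℕ) (Ω : Set (Fin n → ℝ)) (hΩ : IsOpen Ω)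
    (ε : Fin n → ℝ) (hε : ∀ i, ε i = 1 ∨ ε i = -1)
    (h : (Fin n → ℝ) → ℝ) (hh : ContDiffOn ℝ 2 h Ω)
    (p r : (Fin n → ℝ) → ℝ × (Fin n → ℝ) × ℝ × ℝ × ℝ)
    (hp : ∀ u, p u =
      (1, u, (1 / 2) * ∑ k : Fin n, ε k * (u k) ^ 2, h u, 0))
    (hr : ∀ u, r u =
      (0, fun i => ε i * fderiv ℝ h u (Pi.single i 1),
       (∑ k : Fin n, u k * fderiv ℝ h u (Pi.single k 1)) - h u,
       (1 / 2) * ∑ k : Fin n, ε k * (fderiv ℝ h u (Pi.single k 1)) ^ 2, 1)) :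
    ∀ u ∈ Ω, ∀ v : Fin n → ℝ,
      formQ n ε (r u) (fderiv ℝ p u v) = 0 := by
  have hpfun : p = fun u => (1, u, (1 / 2) * ∑ k : Fin n, ε k * (u k) ^ 2, h u, 0) :=
    funext hp
  intro u hu v
  have hdh : DifferentiableAt ℝ h u :=
    (hh.differentiableOn (by norm_num)).differentiableAt (hΩ.mem_nhds hu)
  set D := fderiv ℝ h u with hD
  have hq : HasFDerivAt (fun u : Fin n → ℝ => (1/2:ℝ) * ∑ k : Fin n, ε k * (u k) ^ 2)
      ((1/2:ℝ) • ∑ k : Fin n, (ε k) • ((u k) • (ContinuousLinearMap.proj k :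
        (Fin n → ℝ) →L[ℝ] ℝ) + (u k) • (ContinuousLinearMap.proj k :
        (Fin n → ℝ) →L[ℝ] ℝ))) u := by
    apply HasFDerivAt.const_mul
    apply HasFDerivAt.fun_sum
    intro k _
    have hproj : HasFDerivAt (fun u : Fin n → ℝ => u k)
        (ContinuousLinearMap.proj k : (Fin n → ℝ) →L[ℝ] ℝ) u :=
      (ContinuousLinearMap.proj k : (Fin n → ℝ) →L[ℝ] ℝ).hasFDerivAt
    have := (hproj.mul hproj).const_mul (ε k)
    simpa [sq] using this
  have hP : HasFDerivAt p
      (((0 : (Fin n → ℝ) →L[ℝ] ℝ)).prod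
        ((ContinuousLinearMap.id ℝ (Fin n → ℝ)).prod
          (((1/2:ℝ) • ∑ k : Fin n, (ε k) • ((u k) • (ContinuousLinearMap.proj k :
            (Fin n → ℝ) →L[ℝ] ℝ) + (u k) • (ContinuousLinearMap.proj k :
            (Fin n → ℝ) →L[ℝ] ℝ))).prod
            (D.prod (0 : (Fin n → ℝ) →L[ℝ] ℝ))))) u := by
    rw [hpfun]
    exact HasFDerivAt.prodMk (hasFDerivAt_const (1:ℝ) u) (HasFDerivAt.prodMk (hasFDerivAt_id u)
      (HasFDerivAt.prodMk hq (HasFDerivAt.prodMk hdh.hasFDerivAt (hasFDerivAt_const (0:ℝ) u))))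
  rw [hP.fderiv, hr, formQ]
  simp only [ContinuousLinearMap.prod_apply, ContinuousLinearMap.coe_id', id_eq,
    ContinuousLinearMap.zero_apply]
  have hDv : D v = ∑ i : Fin n, D (Pi.single i 1) * v i := by
    have hv : v = ∑ i : Fin n, Pi.single i (v i) := (Finset.univ_sum_single v).symm
    conv_lhs => rw [hv, map_sum]
    refine Finset.sum_congr rfl fun i _ => ?_
    have hs : Pi.single i (v i) = v i • (Pi.single i 1 : Fin n → ℝ) := by
      rw [← Pi.single_smul, smul_eq_mul, mul_one]
    rw [hs, map_smul, smul_eq_mul, mul_comm]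
  have hε2 : ∀ i, ε i * ε i = 1 := fun i => by rcases hε i with h1 | h1 <;> rw [h1] <;> norm_num
  have hsum : ∑ i : Fin n, ε i * (ε i * D (Pi.single i 1)) * v i
      = ∑ i : Fin n, D (Pi.single i 1) * v i := by
    refine Finset.sum_congr rfl fun i _ => ?_
    rw [← mul_assoc, hε2 i, one_mul]
  rw [hsum, hDv]
  ring
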